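/- Let h : (0,2) × (-1,1) → ℝ be defined by h(x₁,x₂) = (2/π)·ln( cos(πx₂/2) / sin(πx₁/2) ). Then for every θ ∈ (-π/2, 0), the limit as t → 0⁺ of h( t·cos(θ), 1 + t·sin(θ) ) exists and equals (2/π)·ln( -tan(θ) ). -/

import Mathlib

open Real Set Filter

/-- The Scherk-surface function `h(x₁,x₂) = (2/π)·ln( cos(πx₂/2) / sin(πx₁/2) )`. -/
noncomputable def scherk (x : ℝ × ℝ) : ℝ :=
  (2 / π) * Real.log (Real.cos (π * x.2 / 2) / Real.sin (π * x.1 / 2))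

/-- `sin (a t) / t → a` as `t → 0`, `t ≠ 0`. -/
lemma sin_mul_div_tendsto (a : ℝ) :
    Tendsto (fun t : ℝ => Real.sin (a * t) / t) (nhdsWithin 0 {(0:ℝ)}ᶜ) (nhds a) := by
  have hd : HasDerivAt (fun t : ℝ => Real.sin (a * t)) a 0 := by
    have := (Real.hasDerivAt_sin (a * 0)).comp 0 ((hasDerivAt_id 0).const_mul a)
    simpa [Function.comp_def] using this
  have := hasDerivAt_iff_tendsto_slope.mp hd
  refine this.congr (fun t => ?_)
  simp [slope_def_field, div_eq_mul_inv, mul_comm]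

/-- For every `θ ∈ (-π/2, 0)`, `h(t·cos θ, 1 + t·sin θ) → (2/π)·ln(-tan θ)` as `t → 0⁺`. -/
theorem stmt2 (θ : ℝ) (hθ : θ ∈ Ioo (-(π/2)) 0) :
    Tendsto (fun t : ℝ => scherk (t * Real.cos θ, 1 + t * Real.sin θ))
      (nhdsWithin 0 (Ioi 0)) (nhds ((2 / π) * Real.log (-Real.tan θ))) := by
  obtain ⟨hθ1, hθ2⟩ := hθ
  have hcos : 0 < Real.cos θ := Real.cos_pos_of_mem_Ioo ⟨by linarith, by linarith⟩
  have hsin : Real.sin θ < 0 := Real.sin_neg_of_neg_of_neg_pi_lt hθ2 (by linarith [Real.pi_pos])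
  have htan : Real.tan θ < 0 := Real.tan_eq_sin_div_cos θ ▸ div_neg_of_neg_of_pos hsin hcos
  set a := π * Real.sin θ / 2 with ha
  set b := π * Real.cos θ / 2 with hb
  have hb0 : b ≠ 0 := ne_of_gt (by positivity)
  -- limit of the inner ratio
  have hratio : Tendsto (fun t : ℝ => -(Real.sin (a * t) / Real.sin (b * t)))
      (nhdsWithin 0 (Ioi 0)) (nhds (-Real.tan θ)) := by
    have h1 := sin_mul_div_tendsto a
    have h2 := sin_mul_div_tendsto b
    have hdiv : Tendsto (fun t : ℝ => -((Real.sin (a * t) / t) / (Real.sin (b * t) / t)))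
        (nhdsWithin 0 {(0:ℝ)}ᶜ) (nhds (-(a / b))) := ((h1.div h2 hb0)).neg
    have hab : a / b = Real.tan θ := by
      rw [Real.tan_eq_sin_div_cos, ha, hb]
      field_simp
    rw [hab] at hdiv
    have hmono := hdiv.mono_left (nhdsWithin_mono 0 (fun x hx => ne_of_gt hx))
    refine hmono.congr' ?_
    filter_upwards [self_mem_nhdsWithin] with t ht
    have ht0 : t ≠ 0 := ne_of_gt ht
    field_simp
  -- logarithm is continuous at -tan θ
  have hlog : Tendsto Real.log (nhds (-Real.tan θ)) (nhds (Real.log (-Real.tan θ))) :=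
    (Real.continuousAt_log (by linarith)).tendsto
  have := (hlog.comp hratio).const_mul (2 / π)
  refine this.congr' ?_
  filter_upwards [self_mem_nhdsWithin] with t ht
  simp only [Function.comp, scherk]
  congr 2
  have hcos2 : π * (1 + t * Real.sin θ) / 2 = π / 2 + a * t := by rw [ha]; ring
  have hsin2 : π * (t * Real.cos θ) / 2 = b * t := by rw [hb]; ring
  rw [hcos2, hsin2]; simp [Real.cos_add, neg_div]
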